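/- Let 𝒢₀ = (G₀, m, φ, τ) be a Γ-gain framework. If the RUM spectrum Ω(𝒢₀) is an infinite set, then the space of bounded infinitesimal flexes of 𝒢₀ (i.e. the kernel of C̃(𝒢₀) in ℓ∞(Γ, X^{V₀})) is infinite dimensional. -/

import Mathlib

/-- A character of the discrete abelian group `Γ`. -/
def IsChar {Γ : Type*} [AddCommGroup Γ] (χ : Γ → ℂ) : Prop :=
  (∀ γ γ' : Γ, χ (γ + γ') = χ γ * χ γ') ∧ ∀ γ : Γ, ‖χ γ‖ = 1

/-- The orbit matrix `O_{𝒢₀}(χ)` of a `Γ`-gain framework. -/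
def orbitMatrix {Γ X Y V₀ E₀ : Type*} [AddCommGroup Γ]
    [NormedAddCommGroup X] [InnerProductSpace ℂ X]
    [NormedAddCommGroup Y] [Module ℂ Y]
    (s r : E₀ → V₀) (m : E₀ → Γ) (φ : E₀ → (X →ₗ[ℂ] Y)) (U : Γ → (X ≃ₗᵢ[ℂ] X))
    (χ : Γ → ℂ) (x : V₀ → X) (e : E₀) : Y :=
  φ e (x (s e)) - χ (m e) • φ e (U (m e) (x (r e)))

/-- The RUM spectrum `Ω(𝒢₀)`. -/
def RUMspectrum {Γ X Y V₀ E₀ : Type*} [AddCommGroup Γ]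
    [NormedAddCommGroup X] [InnerProductSpace ℂ X]
    [NormedAddCommGroup Y] [Module ℂ Y]
    (s r : E₀ → V₀) (m : E₀ → Γ) (φ : E₀ → (X →ₗ[ℂ] Y)) (U : Γ → (X ≃ₗᵢ[ℂ] X)) :
    Set (Γ → ℂ) :=
  {χ : Γ → ℂ | IsChar χ ∧ ∃ x : V₀ → X, x ≠ 0 ∧ ∀ e, orbitMatrix s r m φ U χ x e = 0}

/-- The gain framework operator `C̃(𝒢₀)`. -/
def gainOp {Γ X Y V₀ E₀ : Type*} [AddCommGroup Γ]
    [NormedAddCommGroup X] [InnerProductSpace ℂ X]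
    [NormedAddCommGroup Y] [Module ℂ Y]
    (s r : E₀ → V₀) (m : E₀ → Γ) (φ : E₀ → (X →ₗ[ℂ] Y)) (U : Γ → (X ≃ₗᵢ[ℂ] X))
    (f : Γ → V₀ → X) (γ : Γ) (e : E₀) : Y :=
  φ e (U (-γ) (f γ (s e) - f (γ + m e) (r e)))

/-- Linear independence of distinct characters with scalar coefficients. -/
lemma char_coeffs_eq_zero {Γ : Type*} [AddCommGroup Γ] {n : ℕ} (χ : Fin n → Γ → ℂ)
    (hchar : ∀ k, IsChar (χ k)) (hinj : Function.Injective χ)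
    (a : Fin n → ℂ) (h : ∀ γ : Γ, ∑ k, a k * χ k γ = 0) : ∀ k, a k = 0 := by
  have hzero : ∀ k, χ k 0 = 1 := by
    intro k
    have h1 := (hchar k).1 0 0
    have h2 : χ k 0 ≠ 0 := by
      intro h0
      have := (hchar k).2 0
      rw [h0] at this; simp at this
    rw [add_zero] at h1
    field_simp at h1
    tauto
  let χ' : Fin n → Multiplicative Γ →* ℂ := fun k =>
    { toFun := fun g => χ k g.toAdd
      map_one' := hzero k
      map_mul' := fun g g' => (hchar k).1 _ _ }
  have hinj' : Function.Injective χ' := by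
    intro k l hkl
    apply hinj
    funext γ
    exact congrFun (congrArg (fun f : Multiplicative Γ →* ℂ => (f : Multiplicative Γ → ℂ)) hkl)
      (Multiplicative.ofAdd γ)
  have li : LinearIndependent ℂ (fun k => (χ' k : Multiplicative Γ → ℂ)) :=
    (linearIndependent_monoidHom (Multiplicative Γ) ℂ).comp χ' hinj'
  have := Fintype.linearIndependent_iff.mp li a ?_
  · exact this
  · funext g
    simp only [Finset.sum_apply, Pi.smul_apply, smul_eq_mul, Pi.zero_apply]
    exact h g.toAdd


/-- if the RUM spectrum `Ω(𝒢₀)` is infinite, then the space of bounded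
infinitesimal flexes of `𝒢₀` (the kernel of `C̃(𝒢₀)` in `ℓ∞(Γ, X^{V₀})`) is infinite
dimensional: for every `n` there are `n` linearly independent bounded infinitesimal
flexes. -/
theorem infinite_RUMspectrum_infinite_dimensional_flex_space
    {Γ : Type*} [AddCommGroup Γ] [AddGroup.FG Γ]
    {X : Type*} [NormedAddCommGroup X] [InnerProductSpace ℂ X] [FiniteDimensional ℂ X]
    {Y : Type*} [NormedAddCommGroup Y] [InnerProductSpace ℂ Y] [FiniteDimensional ℂ Y]
    {V₀ E₀ : Type*} [Fintype V₀] [Fintype E₀]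
    (s r : E₀ → V₀) (m : E₀ → Γ) (φ : E₀ → (X →ₗ[ℂ] Y))
    (τ : Γ → (X ≃ᵃⁱ[ℂ] X))
    (hτ : ∀ γ γ' : Γ, ∀ x : X, τ (γ + γ') x = τ γ (τ γ' x))
    (U : Γ → (X ≃ₗᵢ[ℂ] X)) (hU : ∀ γ x, U γ x = τ γ x - τ γ 0)
    (hinf : (RUMspectrum s r m φ U).Infinite) :
    ∀ n : ℕ, ∃ u : Fin n → Γ → V₀ → X,
      (∀ k, (∃ M : ℝ, ∀ (γ : Γ) (v : V₀), ‖u k γ v‖ ≤ M) ∧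
        ∀ (γ : Γ) (e : E₀), gainOp s r m φ U (u k) γ e = 0) ∧
      LinearIndependent ℂ u := by
  have hUmul : ∀ γ γ' : Γ, ∀ x : X, U (γ + γ') x = U γ (U γ' x) := by
    intro γ γ' x
    have h1 : ∀ y : X, τ γ y = U γ y + τ γ 0 := by
      intro y; rw [hU]; abel
    rw [hU, hτ γ γ' x, hτ γ γ' 0, h1 (τ γ' x), h1 (τ γ' 0)]
    have h2 : τ γ' x - τ γ' 0 = U γ' x := (hU γ' x).symm
    have h3 : (U γ) (τ γ' x) + (τ γ) 0 - ((U γ) (τ γ' 0) + (τ γ) 0)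
        = (U γ) (τ γ' x) - (U γ) (τ γ' 0) := by abel
    rw [h3, ← (U γ).map_sub, h2]
  have hU0 : ∀ x : X, U 0 x = x := by
    intro x
    have h := hUmul 0 0 x
    rw [add_zero] at h
    exact (U 0).injective h.symm
  have hUneg : ∀ γ : Γ, ∀ x : X, U (-γ) (U γ x) = x := by
    intro γ x
    have h := hUmul (-γ) γ x
    rw [neg_add_cancel, hU0] at h
    exact h.symm
  intro n
  haveI := hinf.to_subtype
  let emb : Fin n ↪ (RUMspectrum s r m φ U) :=
    Fin.valEmbedding.trans (Infinite.natEmbedding _)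
  let χ : Fin n → Γ → ℂ := fun k => (emb k : Γ → ℂ)
  have hχinj : Function.Injective χ := fun k l h => emb.injective (Subtype.ext h)
  have hmem : ∀ k, χ k ∈ RUMspectrum s r m φ U := fun k => (emb k).2
  have hchar : ∀ k, IsChar (χ k) := fun k => (hmem k).1
  choose x hx0 hxeq using fun k => (hmem k).2
  -- the flexes
  refine ⟨fun k γ v => χ k γ • U γ (x k v), fun k => ⟨⟨∑ v, ‖x k v‖, ?_⟩, ?_⟩, ?_⟩
  · -- boundedness
    intro γ v
    rw [norm_smul, (hchar k).2, one_mul, (U γ).norm_map]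
    exact Finset.single_le_sum (fun v _ => norm_nonneg (x k v)) (Finset.mem_univ v)
  · -- flex equation
    intro γ e
    unfold gainOp
    have hd : U (-γ) (χ k γ • U γ (x k (s e)) - χ k (γ + m e) • U (γ + m e) (x k (r e)))
        = χ k γ • (x k (s e) - χ k (m e) • U (m e) (x k (r e))) := by
      rw [(U (-γ)).map_sub, (U (-γ)).map_smul, (U (-γ)).map_smul, hUneg,
        hUmul γ (m e), hUneg, (hchar k).1, smul_sub, mul_smul]
    rw [hd, map_smul, map_sub, map_smul]
    have := hxeq k e
    unfold orbitMatrix at this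
    rw [this]
    simp
  · -- linear independence
    rw [Fintype.linearIndependent_iff]
    intro c hc k
    have hev : ∀ (γ : Γ) (v : V₀), ∑ l, (c l * χ l γ) • x l v = 0 := by
      intro γ v
      have h1 : ∑ l, c l • (χ l γ • U γ (x l v)) = 0 := by
        have := congrFun (congrFun hc γ) v
        simpa using this
      have h2 : (U γ).symm (∑ l, c l • (χ l γ • U γ (x l v))) = 0 := by
        rw [h1]; simp
      rw [map_sum] at h2
      convert h2 using 2 with l
      rw [(U γ).symm.map_smul, (U γ).symm.map_smul, (U γ).symm_apply_apply, mul_smul]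
    have hck : ∀ v : V₀, c k * (inner ℂ (x k v) (x k v) : ℂ) = 0 := by
      intro v
      have := char_coeffs_eq_zero χ hchar hχinj
        (fun l => c l * (inner ℂ (x k v) (x l v) : ℂ)) ?_ k
      · exact this
      · intro γ
        calc ∑ l, (c l * (inner ℂ (x k v) (x l v) : ℂ)) * χ l γ
            = (inner ℂ (x k v) (∑ l, (c l * χ l γ) • x l v) : ℂ) := by
              rw [inner_sum]
              refine Finset.sum_congr rfl fun l _ => ?_
              rw [inner_smul_right]; ring
          _ = 0 := by rw [hev γ v, inner_zero_right]
    obtain ⟨v, hv⟩ : ∃ v, x k v ≠ 0 := by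
      by_contra h
      push_neg at h
      exact hx0 k (funext h)
    have := hck v
    rcases mul_eq_zero.mp this with h | h
    · exact h
    · exact absurd h (inner_self_ne_zero.mpr hv)
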